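/- Let n ≥ 1 and let A ∈ M_n(ℂ) with Tr(A) a nonnegative real number and Re(A) ≤ S for some Hermitian S ∈ M_n(ℂ). Let (A_m)_{m≥1} be a sequence in M_n(ℂ) such that Tr(S A_m) = 0, Tr(A A_m) = 0, and ‖A_m‖ ≤ 1 for every m ≥ 1. Set α_0 = Tr(A) and α_m = Tr(A A_m*) for m ≥ 1. Then for every real r with 0 ≤ r ≤ 1/3, the series ∑_{m=0}^∞ |α_m| r^m converges and ∑_{m=0}^∞ |α_m| r^m ≤ Tr(S). -/

import Mathlib

open Matrix
open scoped Matrix.Norms.L2Operator ComplexOrder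

lemma key_bound {n : ℕ} (T X : Matrix (Fin n) (Fin n) ℂ) (hT : T.PosSemidef) :
    ‖(T * X).trace‖ ≤ ‖X‖ * T.trace.re := by
  open scoped MatrixOrder in obtain ⟨C, rfl⟩ := CStarAlgebra.nonneg_iff_eq_star_mul_self.mp hT.nonneg
  set v : Fin n → EuclideanSpace ℂ (Fin n) :=
    fun i => (WithLp.equiv 2 (Fin n → ℂ)).symm (star (C i)) with hv
  have htr : ((Cᴴ * C) * X).trace = (C * X * Cᴴ).trace := (Matrix.trace_mul_cycle C X Cᴴ).symm
  have hentry : ∀ i, (C * X * Cᴴ) i i =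
      (inner ℂ (v i) ((WithLp.equiv 2 (Fin n → ℂ)).symm (X *ᵥ star (C i))) : ℂ) := by
    intro i
    rw [hv, WithLp.equiv_symm_apply, EuclideanSpace.inner_toLp_toLp]
    simp [Matrix.mul_apply, Matrix.mulVec, dotProduct, Finset.mul_sum, Finset.sum_mul]
    rw [Finset.sum_comm]
    congr 1; ext j; congr 1; ext k; ring
  have hebound : ∀ i, ‖(C * X * Cᴴ) i i‖ ≤ ‖X‖ * ‖v i‖ ^ 2 := by
    intro i
    rw [hentry i]
    calc ‖(inner ℂ (v i) ((WithLp.equiv 2 (Fin n → ℂ)).symm (X *ᵥ star (C i))) : ℂ)‖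
        ≤ ‖v i‖ * ‖(WithLp.equiv 2 (Fin n → ℂ)).symm (X *ᵥ star (C i))‖ := by
          exact norm_inner_le_norm _ _
      _ ≤ ‖v i‖ * (‖X‖ * ‖v i‖) := by
          refine mul_le_mul_of_nonneg_left ?_ (norm_nonneg _)
          exact X.l2_opNorm_mulVec (v i)
      _ = ‖X‖ * ‖v i‖ ^ 2 := by ring
  have hvsq : ∀ i, ‖v i‖ ^ 2 = ∑ j, ‖C i j‖ ^ 2 := by
    intro i
    rw [EuclideanSpace.norm_eq, Real.sq_sqrt (by positivity)]
    simp [hv]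
  have hsum : ((Cᴴ * C)).trace.re = ∑ i, ∑ j, ‖C i j‖ ^ 2 := by
    simp only [Matrix.trace, Matrix.diag, Matrix.mul_apply, Matrix.conjTranspose_apply]
    rw [Complex.re_sum]
    rw [Finset.sum_comm]
    congr 1; ext i
    rw [Complex.re_sum]
    congr 1; ext j
    rw [Complex.star_def, ← Complex.normSq_eq_conj_mul_self]
    simp [Complex.normSq_eq_norm_sq, ← Complex.ofReal_pow]
  calc ‖(Cᴴ * C * X).trace‖ = ‖(C * X * Cᴴ).trace‖ := by rw [htr]
    _ ≤ ∑ i, ‖(C * X * Cᴴ) i i‖ := by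
        exact norm_sum_le _ _
    _ ≤ ∑ i, ‖X‖ * ‖v i‖ ^ 2 := Finset.sum_le_sum fun i _ => hebound i
    _ = ‖X‖ * ∑ i, ∑ j, ‖C i j‖ ^ 2 := by rw [← Finset.mul_sum]; congr 1; exact Finset.sum_congr rfl fun i _ => hvsq i
    _ = ‖X‖ * ((Cᴴ * C)).trace.re := by rw [hsum]

/-- **Generalized Bohr's inequality for matrices** with trace-orthogonality
conditions in place of triangularity (radius `1/3`). -/
theorem bohr_matrix_trace_orthogonal {n : ℕ} (hn : 1 ≤ n)
    (A S : Matrix (Fin n) (Fin n) ℂ)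
    (hA_tr : 0 ≤ A.trace)
    (hS_herm : S.IsHermitian)
    (hAS : (S - (2 : ℂ)⁻¹ • (A + Aᴴ)).PosSemidef)
    (B : ℕ → Matrix (Fin n) (Fin n) ℂ)
    (hSB : ∀ m : ℕ, 1 ≤ m → (S * B m).trace = 0)
    (hAB : ∀ m : ℕ, 1 ≤ m → (A * B m).trace = 0)
    (hB_norm : ∀ m : ℕ, 1 ≤ m → ‖B m‖ ≤ 1)
    (α : ℕ → ℂ)
    (hα0 : α 0 = A.trace)
    (hα : ∀ m : ℕ, 1 ≤ m → α m = (A * (B m)ᴴ).trace)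
    (r : ℝ) (hr0 : 0 ≤ r) (hr1 : r ≤ 1 / 3) :
    Summable (fun m : ℕ => ‖α m‖ * r ^ m) ∧
      ∑' m : ℕ, ‖α m‖ * r ^ m ≤ S.trace.re := by
  set T : Matrix (Fin n) (Fin n) ℂ := S - (2 : ℂ)⁻¹ • (A + Aᴴ) with hTdef
  -- trace facts about A
  have hAre : 0 ≤ A.trace.re := (Complex.le_def.mp hA_tr).1
  have hAim : A.trace.im = 0 := ((Complex.le_def.mp hA_tr).2).symm
  have hAtr_real : A.trace = (A.trace.re : ℂ) := (Complex.re_add_im A.trace ▸ by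
    rw [hAim]; simp)
  -- trace of T
  have hTtr : T.trace = S.trace - (A.trace.re : ℂ) := by
    rw [hTdef, Matrix.trace_sub, Matrix.trace_smul, Matrix.trace_add,
      Matrix.trace_conjTranspose, smul_eq_mul, Complex.star_def, Complex.add_conj]
    push_cast
    ring
  have hTre : T.trace.re = S.trace.re - A.trace.re := by rw [hTtr]; simp
  -- T.trace.re is nonnegative
  have hTre0 : 0 ≤ T.trace.re := by
    have hdiag : ∀ i, 0 ≤ T i i := by
      intro i
      have h := hAS.dotProduct_mulVec_nonneg (Pi.single i 1)
      simpa [dotProduct, Matrix.mulVec, Pi.single_apply] using h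
    have : (0 : ℝ) ≤ ∑ i, (T i i).re :=
      Finset.sum_nonneg fun i _ => (Complex.le_def.mp (hdiag i)).1
    simpa [Matrix.trace, Matrix.diag, Complex.re_sum] using this
  set c : ℝ := 2 * T.trace.re with hc
  have hc0 : 0 ≤ c := by positivity
  -- key bound on |α m| for m ≥ 1
  have hαbound : ∀ m : ℕ, 1 ≤ m → ‖α m‖ ≤ c := by
    intro m hm
    have hA' : (Aᴴ * (B m)ᴴ).trace = 0 := by
      rw [← Matrix.conjTranspose_mul, Matrix.trace_conjTranspose,
        Matrix.trace_mul_comm, hAB m hm, star_zero]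
    have hS' : (S * (B m)ᴴ).trace = 0 := by
      rw [← hS_herm.eq, ← Matrix.conjTranspose_mul, Matrix.trace_conjTranspose,
        Matrix.trace_mul_comm, hSB m hm, star_zero]
    have h2 : (T * (B m)ᴴ).trace = -(2 : ℂ)⁻¹ * α m := by
      rw [hTdef, Matrix.sub_mul, Matrix.trace_sub, hS', Matrix.smul_mul,
        Matrix.trace_smul, Matrix.add_mul, Matrix.trace_add, hA', hα m hm, smul_eq_mul]
      ring
    have h3 := key_bound T (B m)ᴴ hAS
    rw [h2] at h3
    have h4 : ‖-(2 : ℂ)⁻¹ * α m‖ = 2⁻¹ * ‖α m‖ := by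
      rw [norm_mul]; simp
    rw [h4] at h3
    have h5 : ‖(B m)ᴴ‖ ≤ 1 := by rw [Matrix.l2_opNorm_conjTranspose]; exact hB_norm m hm
    nlinarith [norm_nonneg (α m)]
  -- |α 0|
  have hα0abs : ‖α 0‖ = A.trace.re := by
    rw [hα0, hAtr_real, Complex.norm_real, Real.norm_eq_abs, abs_of_nonneg hAre]
    simp
  have hrlt : r < 1 := lt_of_le_of_lt hr1 (by norm_num)
  -- summability
  have hfle : ∀ m : ℕ, ‖α m‖ * r ^ m ≤ (A.trace.re + c) * r ^ m := by
    intro m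
    rcases Nat.eq_zero_or_pos m with h | h
    · subst h; simp [hα0abs]; linarith
    · exact mul_le_mul_of_nonneg_right
        (le_trans (hαbound m h) (by linarith)) (by positivity)
  have hgsum : Summable (fun m : ℕ => (A.trace.re + c) * r ^ m) :=
    (summable_geometric_of_lt_one hr0 hrlt).mul_left _
  have hfsum : Summable (fun m : ℕ => ‖α m‖ * r ^ m) :=
    Summable.of_nonneg_of_le (fun m => by positivity) hfle hgsum
  refine ⟨hfsum, ?_⟩
  -- bound the tail
  have htail_le : (∑' m : ℕ, ‖α (m + 1)‖ * r ^ (m + 1))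
      ≤ c * r * (1 - r)⁻¹ := by
    have h1 : (∑' m : ℕ, ‖α (m + 1)‖ * r ^ (m + 1))
        ≤ ∑' m : ℕ, c * r * r ^ m := by
      refine Summable.tsum_le_tsum ?_ (hfsum.comp_injective (add_left_injective 1)) ?_
      · intro m
        have := hαbound (m + 1) (by omega)
        calc ‖α (m + 1)‖ * r ^ (m + 1) ≤ c * r ^ (m + 1) :=
              mul_le_mul_of_nonneg_right this (by positivity)
          _ = c * r * r ^ m := by ring
      · exact (summable_geometric_of_lt_one hr0 hrlt).mul_left _
    rw [tsum_mul_left, tsum_geometric_of_lt_one hr0 hrlt] at h1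
    exact h1
  have hsplit : (∑' m : ℕ, ‖α m‖ * r ^ m)
      = ‖α 0‖ * r ^ 0 + ∑' m : ℕ, ‖α (m + 1)‖ * r ^ (m + 1) :=
    Summable.tsum_eq_zero_add hfsum
  rw [hsplit, hα0abs, pow_zero, mul_one]
  have h1r : 0 < 1 - r := by linarith
  have hfrac : r * (1 - r)⁻¹ ≤ 2⁻¹ := by
    rw [← div_eq_mul_inv, div_le_iff₀ h1r]
    linarith
  have hgeo : c * (r * (1 - r)⁻¹) ≤ T.trace.re := by
    have := mul_le_mul_of_nonneg_left hfrac hc0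
    rw [hc] at this ⊢
    linarith
  have htail2 : (∑' m : ℕ, ‖α (m + 1)‖ * r ^ (m + 1)) ≤ T.trace.re := by
    refine le_trans htail_le ?_
    rw [mul_assoc]
    exact hgeo
  linarith [hTre]
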